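/- Let Φ ∈ ℝ^{np×n} be (n-stacked) q-error correctable, x ∈ ℝⁿ, e ∈ Σ_qⁿ, v ∈ ℝ^{np} with ‖v_i‖₂ ≤ v_max for all blocks i, ẑ = Φx + e + v, and fix an integer r with q ≤ r ≤ 2q and v'_max := ϑ_{p,q,r}(Φ)·v_max. If a vector x̂ ∈ ℝⁿ satisfies |{i ∈ {1,…,p} : ‖ẑ_i − Φ_{Γᵢⁿ}x̂‖₂ > v'_max}| > q, then ‖x̂ − x‖₂ > κ^{c'}_{p,q,r}(Φ)·v_max, where κ^{c'}_{p,q,r}(Φ) := (ϑ_{p,q,r}(Φ) − 1)/max_{i ∈ {1,…,p}} ‖Φ_{Γᵢⁿ}‖₂. -/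

import Mathlib

open scoped Classical
open Finset Matrix

noncomputable section

namespace SecureEst

variable {n p : ℕ}

/-- The `i`-th `n`-block of an `n`-stacked vector. -/
def blk (z : Fin p × Fin n → ℝ) (i : Fin p) : Fin n → ℝ := fun j => z (i, j)

/-- The `n`-stacked support of a stacked vector. -/
def blockSupp (z : Fin p × Fin n → ℝ) : Finset (Fin p) :=
  Finset.univ.filter fun i => blk z i ≠ 0

/-- The `n`-stacked ℓ⁰ "norm": number of nonzero blocks. -/
def l0n (z : Fin p × Fin n → ℝ) : ℕ := (blockSupp z).card

/-- `n`-stacked `q`-sparsity: membership in `Σ_qⁿ`. -/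
def Sparse (q : ℕ) (z : Fin p × Fin n → ℝ) : Prop := l0n z ≤ q

/-- Euclidean (ℓ²) norm of a real vector. -/
def enorm {m : Type*} [Fintype m] (x : m → ℝ) : ℝ := Real.sqrt (∑ i, x i ^ 2)

/-- `Φ_{Λⁿ}`: zero out the row-blocks of `Φ` outside `Λ`. -/
def zeroB (Λ : Finset (Fin p)) (Φ : Matrix (Fin p × Fin n) (Fin n) ℝ) :
    Matrix (Fin p × Fin n) (Fin n) ℝ :=
  fun ij k => if ij.1 ∈ Λ then Φ ij k else 0

/-- `z_{Λⁿ}`: zero out the blocks of a stacked vector outside `Λ`. -/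
def zeroV (Λ : Finset (Fin p)) (z : Fin p × Fin n → ℝ) : Fin p × Fin n → ℝ :=
  fun ij => if ij.1 ∈ Λ then z ij else 0

/-- `Φ_{Γᵢⁿ}`: the `i`-th row-block of `Φ`. -/
def rowBlk (Φ : Matrix (Fin p × Fin n) (Fin n) ℝ) (i : Fin p) :
    Matrix (Fin n) (Fin n) ℝ := fun j k => Φ (i, j) k

/-- Moore–Penrose pseudoinverse (full-column-rank formula `(MᵀM)⁻¹Mᵀ`). -/
def pinv {m k : Type*} [Fintype m] [Fintype k] [DecidableEq k]
    (M : Matrix m k ℝ) : Matrix k m ℝ := (Mᵀ * M)⁻¹ * Mᵀ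

/-- Spectral norm (largest singular value) of a real matrix. -/
def specNorm {m k : Type*} [Fintype m] [Fintype k] (M : Matrix m k ℝ) : ℝ :=
  sSup {r | ∃ x : k → ℝ, enorm x = 1 ∧ r = enorm (M.mulVec x)}

/-- Minimum singular value of a (tall) real matrix. -/
def sigmaMin {m k : Type*} [Fintype m] [Fintype k] (M : Matrix m k ℝ) : ℝ :=
  sInf {r | ∃ x : k → ℝ, enorm x = 1 ∧ r = enorm (M.mulVec x)}

/-- `(n-stacked) q`-error detectability. -/
def ErrDetectable (Φ : Matrix (Fin p × Fin n) (Fin n) ℝ) (q : ℕ) : Prop :=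
  ∀ x x' : Fin n → ℝ, ∀ e : Fin p × Fin n → ℝ,
    Sparse q e → Φ.mulVec x + e = Φ.mulVec x' → x = x'

/-- `(n-stacked) q`-error correctability. -/
def ErrCorrectable (Φ : Matrix (Fin p × Fin n) (Fin n) ℝ) (q : ℕ) : Prop :=
  ∀ x₁ x₂ : Fin n → ℝ, ∀ e₁ e₂ : Fin p × Fin n → ℝ,
    Sparse q e₁ → Sparse q e₂ →
      Φ.mulVec x₁ + e₁ = Φ.mulVec x₂ + e₂ → x₁ = x₂

/-- `(n-stacked)` cospark. -/
def cosparkN (Φ : Matrix (Fin p × Fin n) (Fin n) ℝ) : ℕ :=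
  sInf {m : ℕ | ∃ x : Fin n → ℝ, x ≠ 0 ∧ m = l0n (Φ.mulVec x)}

/-- `ρ_{p,q}(Φ)`. -/
def rho (Φ : Matrix (Fin p × Fin n) (Fin n) ℝ) (q : ℕ) : ℝ :=
  sInf {r | ∃ Λ : Finset (Fin p), Λ.card = p - q ∧ r = sigmaMin (zeroB Λ Φ)}

/-- `η_{p,q}(Φ)`. -/
def eta (Φ : Matrix (Fin p × Fin n) (Fin n) ℝ) (q : ℕ) : ℝ :=
  sSup {r | ∃ Λ : Finset (Fin p), Λ.card = p - q ∧
    ∃ i : Fin p, i ∉ Λ ∧ r = specNorm (rowBlk Φ i * pinv (zeroB Λ Φ))}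

/-- `κ^d_{p,q}(Φ)`. -/
def kappaD (Φ : Matrix (Fin p × Fin n) (Fin n) ℝ) (q : ℕ) : ℝ :=
  (Real.sqrt (p : ℝ) + 1) * Real.sqrt ((p - q : ℕ) : ℝ) / rho Φ q

/-- `κ^e_{p,q}(Φ)`. -/
def kappaE (Φ : Matrix (Fin p × Fin n) (Fin n) ℝ) (q : ℕ) : ℝ :=
  (eta Φ q * Real.sqrt ((p - q : ℕ) : ℝ) + 1) * (Real.sqrt (p : ℝ) + 1)

/-- The finite candidate set `F_{p,r}(ẑ)`. -/
def Fset (Φ : Matrix (Fin p × Fin n) (Fin n) ℝ) (r : ℕ) (z : Fin p × Fin n → ℝ) :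
    Set (Fin n → ℝ) :=
  {χ | ∃ Λ : Finset (Fin p), Λ.card = p - r ∧
    χ = (pinv (zeroB Λ Φ)).mulVec (zeroV Λ z)}

/-- `η'_{p,q,r}(Φ)`. -/
def eta' (Φ : Matrix (Fin p × Fin n) (Fin n) ℝ) (q r : ℕ) : ℝ :=
  sSup {a | ∃ Λ : Finset (Fin p), Λ.card = p - q ∧
    a = sInf {b | ∃ Λ' : Finset (Fin p), Λ' ⊆ Λ ∧ Λ'.card = p - r ∧
      b = sSup {c | ∃ i ∈ Λ \ Λ',
        c = specNorm (rowBlk Φ i * pinv (zeroB Λ' Φ))}}}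

/-- `ϑ_{p,q,r}(Φ)`. -/
def theta (Φ : Matrix (Fin p × Fin n) (Fin n) ℝ) (q r : ℕ) : ℝ :=
  max (eta' Φ q r * Real.sqrt ((p - r : ℕ) : ℝ) + 1) (Real.sqrt ((p - r : ℕ) : ℝ))

/-- `κ^c_{p,q,r}(Φ)`. -/
def kappaC (Φ : Matrix (Fin p × Fin n) (Fin n) ℝ) (q r : ℕ) : ℝ :=
  (theta Φ q r + 1) * Real.sqrt ((p - 2 * q : ℕ) : ℝ) / rho Φ (2 * q)

/-- `κ^{c'}_{p,q,r}(Φ)`. -/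
def kappaC' (Φ : Matrix (Fin p × Fin n) (Fin n) ℝ) (q r : ℕ) : ℝ :=
  (theta Φ q r - 1) / sSup {c | ∃ i : Fin p, c = specNorm (rowBlk Φ i)}

/-- Stacked observability matrix `G` with row-blocks `Gᵢ = [cᵢᵀ (cᵢA)ᵀ ⋯ (cᵢAⁿ⁻¹)ᵀ]ᵀ`. -/
def obsG (A : Matrix (Fin n) (Fin n) ℝ) (C : Matrix (Fin p) (Fin n) ℝ) :
    Matrix (Fin p × Fin n) (Fin n) ℝ :=
  fun ij k => (C * A ^ (ij.2 : ℕ)) ij.1 k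

/-- `C_Λ`: zero out the rows of `C` outside `Λ`. -/
def zeroRows (Λ : Finset (Fin p)) (C : Matrix (Fin p) (Fin n) ℝ) :
    Matrix (Fin p) (Fin n) ℝ :=
  fun i k => if i ∈ Λ then C i k else 0

/-- Observability of the pair `(A, C)`: the observability matrix has full column rank. -/
def Observable (A : Matrix (Fin n) (Fin n) ℝ) (C : Matrix (Fin p) (Fin n) ℝ) : Prop :=
  (obsG A C).rank = n

/-- `q`-redundant observability. -/
def RedObservable (A : Matrix (Fin n) (Fin n) ℝ) (C : Matrix (Fin p) (Fin n) ℝ)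
    (q : ℕ) : Prop :=
  ∀ Λ : Finset (Fin p), p - q ≤ Λ.card → Observable A (zeroRows Λ C)

/-- Euclidean norm of a complex vector. -/
def enormC {m : Type*} [Fintype m] (v : m → ℂ) : ℝ :=
  Real.sqrt (∑ i, ‖v i‖ ^ 2)

/-- The set `V(A)` of normalized complex eigenvectors of a real matrix `A`. -/
def eigSet (A : Matrix (Fin n) (Fin n) ℝ) : Set (Fin n → ℂ) :=
  {v | (∃ μ : ℂ, (A.map Complex.ofReal).mulVec v = μ • v) ∧ enormC v = 1}

/-- ℓ⁰ norm of a complex vector. -/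
def l0C (y : Fin p → ℂ) : ℕ := (Finset.univ.filter fun i => y i ≠ 0).card

/-- `n`-stacked ℓ⁰ norm of a complex stacked vector. -/
def l0nC (z : Fin p × Fin n → ℂ) : ℕ :=
  (Finset.univ.filter fun i => (fun j => z (i, j)) ≠ (0 : Fin n → ℂ)).card

/-- The dynamic security index `α_d(A, C)`. -/
def alphaD (A : Matrix (Fin n) (Fin n) ℝ) (C : Matrix (Fin p) (Fin n) ℝ) : ℕ :=
  sInf {m : ℕ | ∃ v ∈ eigSet A, m = l0C ((C.map Complex.ofReal).mulVec v)}

end SecureEst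

namespace SecureEst

lemma enorm_eq_norm {m : Type*} [Fintype m] (x : m → ℝ) :
    enorm x = ‖(WithLp.equiv 2 (m → ℝ)).symm x‖ := by
  rw [EuclideanSpace.norm_eq]; simp [enorm, sq_abs]

lemma enorm_nonneg {m : Type*} [Fintype m] (x : m → ℝ) : 0 ≤ enorm x :=
  Real.sqrt_nonneg _

lemma enorm_add_le {m : Type*} [Fintype m] (x y : m → ℝ) :
    enorm (x + y) ≤ enorm x + enorm y := by
  simp only [enorm_eq_norm]
  exact norm_add_le ((WithLp.equiv 2 (m → ℝ)).symm x) ((WithLp.equiv 2 (m → ℝ)).symm y)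

lemma enorm_sub_rev {m : Type*} [Fintype m] (x y : m → ℝ) :
    enorm (x - y) = enorm (y - x) := by
  simp only [enorm_eq_norm]
  exact norm_sub_rev ((WithLp.equiv 2 (m → ℝ)).symm x) ((WithLp.equiv 2 (m → ℝ)).symm y)

lemma enorm_smul {m : Type*} [Fintype m] (c : ℝ) (x : m → ℝ) :
    enorm (c • x) = |c| * enorm x := by
  simp only [enorm_eq_norm]
  rw [show (WithLp.equiv 2 (m → ℝ)).symm (c • x) = c • (WithLp.equiv 2 (m → ℝ)).symm x from rfl,
    norm_smul, Real.norm_eq_abs]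

lemma frob_bound {m k : Type*} [Fintype m] [Fintype k] (M : Matrix m k ℝ) (x : k → ℝ) :
    enorm (M.mulVec x) ≤ Real.sqrt (∑ i, ∑ j, M i j ^ 2) * enorm x := by
  simp only [enorm]
  rw [← Real.sqrt_mul (by positivity)]
  apply Real.sqrt_le_sqrt
  rw [Finset.sum_mul]
  apply Finset.sum_le_sum
  intro i _
  have := Finset.sum_mul_sq_le_sq_mul_sq Finset.univ (M i) x
  simpa [Matrix.mulVec, dotProduct] using this

lemma specNorm_bdd {m k : Type*} [Fintype m] [Fintype k] (M : Matrix m k ℝ) :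
    BddAbove {r | ∃ x : k → ℝ, enorm x = 1 ∧ r = enorm (M.mulVec x)} := by
  refine ⟨Real.sqrt (∑ i, ∑ j, M i j ^ 2), ?_⟩
  rintro r ⟨x, hx, rfl⟩
  calc enorm (M.mulVec x) ≤ Real.sqrt (∑ i, ∑ j, M i j ^ 2) * enorm x := frob_bound M x
    _ = _ := by rw [hx, mul_one]

lemma enorm_mulVec_le {m k : Type*} [Fintype m] [Fintype k] (M : Matrix m k ℝ) (x : k → ℝ) :
    enorm (M.mulVec x) ≤ specNorm M * enorm x := by
  rcases eq_or_ne x 0 with rfl | hx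
  · simp [Matrix.mulVec_zero, enorm_eq_norm]
  · have hxn : 0 < enorm x := by
      rcases (enorm_nonneg x).lt_or_eq with h | h
      · exact h
      · exfalso; apply hx
        have := enorm_eq_norm x
        rw [← h] at this
        have h0 : ‖(WithLp.equiv 2 (k → ℝ)).symm x‖ = 0 := this.symm
        have := norm_eq_zero.mp h0
        exact congrArg (WithLp.equiv 2 (k → ℝ)) this
    have hmem : enorm (M.mulVec ((enorm x)⁻¹ • x)) ∈
        {r | ∃ y : k → ℝ, enorm y = 1 ∧ r = enorm (M.mulVec y)} := by
      refine ⟨(enorm x)⁻¹ • x, ?_, rfl⟩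
      rw [enorm_smul, abs_of_pos (inv_pos.mpr hxn), inv_mul_cancel₀ hxn.ne']
    have hle := le_csSup (specNorm_bdd M) hmem
    rw [Matrix.mulVec_smul, enorm_smul, abs_of_pos (inv_pos.mpr hxn)] at hle
    have := mul_le_mul_of_nonneg_right hle hxn.le
    rwa [mul_comm, ← mul_assoc, mul_inv_cancel₀ hxn.ne', one_mul] at this

lemma theta_ge_one {n p : ℕ} (Φ : Matrix (Fin p × Fin n) (Fin n) ℝ) (q r : ℕ) :
    1 ≤ theta Φ q r := by
  unfold theta
  rcases le_or_gt p r with h | h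
  · have h0 : (p - r : ℕ) = 0 := Nat.sub_eq_zero_of_le h
    rw [h0]
    simpa using le_max_left (eta' Φ q r * Real.sqrt ((0:ℕ):ℝ) + 1) (Real.sqrt ((0:ℕ):ℝ))
  · have h1 : 1 ≤ ((p - r : ℕ) : ℝ) := by
      exact_mod_cast Nat.one_le_iff_ne_zero.mpr (Nat.sub_ne_zero_of_lt h)
    have : (1:ℝ) ≤ Real.sqrt ((p - r : ℕ) : ℝ) := by
      rw [show (1:ℝ) = Real.sqrt 1 from Real.sqrt_one.symm]
      exact Real.sqrt_le_sqrt h1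
    exact this.trans (le_max_right _ _)

end SecureEst

open SecureEst in
/-- Theorem 4.(ii): if `xhat` satisfies
`|{i : ‖zhatᵢ − Φ_{Γᵢⁿ}xhat‖₂ > v'_max}| > q` then `‖xhat − x‖₂ > κ^{c'}_{p,q,r}(Φ) v_max`. -/
theorem many_large_residuals_implies_far {n p : ℕ}
    (Φ : Matrix (Fin p × Fin n) (Fin n) ℝ) (q r : ℕ)
    (hc : ErrCorrectable Φ q) (hqr : q ≤ r) (hr2q : r ≤ 2 * q)
    (x : Fin n → ℝ) (e v : Fin p × Fin n → ℝ) (vmax : ℝ)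
    (he : Sparse q e) (hv : ∀ i : Fin p, SecureEst.enorm (blk v i) ≤ vmax)
    (zhat : Fin p × Fin n → ℝ) (hz : zhat = Φ.mulVec x + e + v)
    (xhat : Fin n → ℝ)
    (hcount : q < (Finset.univ.filter fun i : Fin p =>
        theta Φ q r * vmax < SecureEst.enorm (blk zhat i - (rowBlk Φ i).mulVec xhat)).card) :
    kappaC' Φ q r * vmax < SecureEst.enorm (xhat - x) := by
  classical
  set T := Finset.univ.filter fun i : Fin p =>
      theta Φ q r * vmax < SecureEst.enorm (blk zhat i - (rowBlk Φ i).mulVec xhat) with hT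
  obtain ⟨i₀, hi₀⟩ : T.Nonempty := Finset.card_pos.mp (by omega)
  have hvmax : 0 ≤ vmax := le_trans (enorm_nonneg _) (hv i₀)
  have hnsub : ¬ T ⊆ blockSupp e := fun hsub => by
    have := Finset.card_le_card hsub
    have := he
    unfold Sparse l0n at this
    omega
  obtain ⟨i, hiT, hie⟩ := Finset.not_subset.mp hnsub
  have hi : theta Φ q r * vmax < SecureEst.enorm (blk zhat i - (rowBlk Φ i).mulVec xhat) :=
    (Finset.mem_filter.mp hiT).2
  have he0 : blk e i = 0 := by
    by_contra h
    exact hie (Finset.mem_filter.mpr ⟨Finset.mem_univ i, h⟩)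
  have zb : blk zhat i = (rowBlk Φ i).mulVec x + blk v i := by
    funext j
    have h0 : e (i, j) = 0 := congrFun he0 j
    simp [hz, blk, Matrix.mulVec, dotProduct, rowBlk, h0]
  have key : blk zhat i - (rowBlk Φ i).mulVec xhat
      = (rowBlk Φ i).mulVec (x - xhat) + blk v i := by
    rw [zb, Matrix.mulVec_sub]
    abel
  have h1 : theta Φ q r * vmax
      < SecureEst.enorm ((rowBlk Φ i).mulVec (x - xhat)) + vmax := by
    refine lt_of_lt_of_le hi ?_
    rw [key]
    exact le_trans (enorm_add_le _ _) (add_le_add le_rfl (hv i))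
  set S := sSup {c | ∃ i : Fin p, c = specNorm (rowBlk Φ i)} with hSdef
  have hSbdd : BddAbove {c | ∃ i : Fin p, c = specNorm (rowBlk Φ i)} := by
    have hset : {c | ∃ i : Fin p, c = specNorm (rowBlk Φ i)}
        = Set.range fun i : Fin p => specNorm (rowBlk Φ i) := by
      ext c; simp [eq_comm, Set.range]
    rw [hset]
    exact Set.Finite.bddAbove (Set.finite_range _)
  have hSle : specNorm (rowBlk Φ i) ≤ S := le_csSup hSbdd ⟨i, rfl⟩
  have h2 : SecureEst.enorm ((rowBlk Φ i).mulVec (x - xhat)) ≤ S * SecureEst.enorm (xhat - x) := by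
    calc SecureEst.enorm ((rowBlk Φ i).mulVec (x - xhat))
        ≤ specNorm (rowBlk Φ i) * SecureEst.enorm (x - xhat) := enorm_mulVec_le _ _
      _ ≤ S * SecureEst.enorm (x - xhat) :=
          mul_le_mul_of_nonneg_right hSle (enorm_nonneg _)
      _ = S * SecureEst.enorm (xhat - x) := by rw [SecureEst.enorm_sub_rev]
  have hθ1 : 1 ≤ theta Φ q r := theta_ge_one Φ q r
  have hlt : (theta Φ q r - 1) * vmax < S * SecureEst.enorm (xhat - x) := by nlinarith
  have hnn : 0 ≤ (theta Φ q r - 1) * vmax := mul_nonneg (by linarith) hvmax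
  have hSE : 0 < S * SecureEst.enorm (xhat - x) := lt_of_le_of_lt hnn hlt
  have hSpos : 0 < S := by nlinarith [enorm_nonneg (xhat - x)]
  unfold kappaC'
  rw [div_mul_eq_mul_div, div_lt_iff₀ hSpos]
  calc (theta Φ q r - 1) * vmax < S * SecureEst.enorm (xhat - x) := hlt
    _ = SecureEst.enorm (xhat - x) * S := mul_comm _ _
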